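/- In the degenerate random balanced sampling construction with d ≥ 2, each Z_l (l = 2,...,d) is uniformly distributed on the interval [c_l - 1/(d-1), c_l + 1/(d-1)] ⊂ [-1,1], where c_l = -1 + (2l-3)/(d-1), and after applying an independent uniformly random permutation to the coordinates, each permuted coordinate is uniform on [-1,1]. -/
import Mathlib


open MeasureTheory Set
open scoped ENNReal NNReal

/-- Degenerate random balanced sampling: `Z_1 ~ Uniform(-1,1)`,
`Z_l = c_l - Z_1/(d-1)` with `c_l = -1 + (2l-3)/(d-1)` for `l = 2,…,d`.
Each such `Z_l` is uniform on `[c_l - 1/(d-1), c_l + 1/(d-1)] ⊆ [-1,1]`, and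
after applying an independent uniformly random permutation of the coordinates,
each permuted coordinate is uniform on `[-1,1]`. -/
lemma aux_map_volume (c D : ℝ) (hD : 0 < D) :
    Measure.map (fun x : ℝ => c - x / D) volume = ENNReal.ofReal D • volume := by
  have h1 : (fun x : ℝ => c - x / D) = (fun y : ℝ => c + y) ∘ (fun x : ℝ => (-D⁻¹) * x) := by
    funext x; simp only [Function.comp_apply]; ring
  have hne : (-D⁻¹ : ℝ) ≠ 0 := by
    simp only [ne_eq, neg_eq_zero, inv_eq_zero]; exact hD.ne'
  rw [h1, ← Measure.map_map (measurable_const_add c) (measurable_const_mul _),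
    Real.map_volume_mul_left hne, Measure.map_smul, map_add_left_eq_self]
  congr 1
  rw [inv_neg, inv_inv, abs_neg, abs_of_pos hD]

lemma aux_inv_scal {D : ℝ} (hD : 0 < D) :
    (ENNReal.ofReal (2 / D))⁻¹ = ENNReal.ofReal D * (ENNReal.ofReal 2)⁻¹ := by
  rw [div_eq_mul_inv, ENNReal.ofReal_mul (by norm_num),
    ENNReal.mul_inv (Or.inl (by simp)) (Or.inl ENNReal.ofReal_ne_top),
    ← ENNReal.ofReal_inv_of_pos (inv_pos.2 hD), inv_inv, mul_comm]

lemma aux_interval_sum (g : ℕ → ℝ) (hg : ∀ j, g j ≤ g (j + 1)) (s : Set ℝ)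
    (hs : MeasurableSet s) (n : ℕ) :
    ∑ j ∈ Finset.range n, volume (Icc (g j) (g (j + 1)) ∩ s)
      = volume (Icc (g 0) (g n) ∩ s) := by
  have hmono : Monotone g := monotone_nat_of_le_succ hg
  induction n with
  | zero =>
    simp only [Finset.range_zero, Finset.sum_empty, Icc_self]
    exact ((measure_mono_null inter_subset_left (Real.volume_singleton))).symm
  | succ n ih =>
    rw [Finset.sum_range_succ, ih]
    have hu : Icc (g 0) (g n) ∪ Icc (g n) (g (n + 1)) = Icc (g 0) (g (n + 1)) :=
      Icc_union_Icc_eq_Icc (hmono (Nat.zero_le n)) (hg n)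
    have key := measure_union_add_inter (μ := volume) (Icc (g 0) (g n) ∩ s)
      ((measurableSet_Icc.inter hs) : MeasurableSet (Icc (g n) (g (n + 1)) ∩ s))
    have hzero : volume ((Icc (g 0) (g n) ∩ s) ∩ (Icc (g n) (g (n + 1)) ∩ s)) = 0 := by
      apply measure_mono_null (t := {g n}) _ Real.volume_singleton
      intro x hx
      have h1 := hx.1.1.2; have h2 := hx.2.1.1
      simp only [mem_singleton_iff]; linarith
    rw [hzero, add_zero] at key
    rw [← key]
    congr 1
    rw [← union_inter_distrib_right, hu]

theorem random_balanced_sampling_uniform {Ω : Type*} [MeasurableSpace Ω]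
    (μ : Measure Ω) [IsProbabilityMeasure μ] (d : ℕ) (hd : 2 ≤ d)
    (Z : ℕ → Ω → ℝ) (hZ1meas : Measurable (Z 1))
    (hZ1 : pdf.IsUniform (Z 1) (Icc (-1:ℝ) 1) μ volume)
    (hZl : ∀ l, 2 ≤ l → l ≤ d →
      Z l = fun ω => (-1 + (2 * (l:ℝ) - 3) / ((d:ℝ) - 1)) - Z 1 ω / ((d:ℝ) - 1))
    (σ : Ω → Equiv.Perm (Fin d))
    (hσunif : ∀ τ : Equiv.Perm (Fin d),
      μ {ω | σ ω = τ} = (Nat.factorial d : ENNReal)⁻¹)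
    (hindep : ∀ τ : Equiv.Perm (Fin d), ∀ s : Set ℝ, MeasurableSet s →
      μ ({ω | σ ω = τ} ∩ (Z 1) ⁻¹' s) = μ {ω | σ ω = τ} * μ ((Z 1) ⁻¹' s)) :
    (∀ l, 2 ≤ l → l ≤ d →
      pdf.IsUniform (Z l)
        (Icc ((-1 + (2 * (l:ℝ) - 3) / ((d:ℝ) - 1)) - 1 / ((d:ℝ) - 1))
             ((-1 + (2 * (l:ℝ) - 3) / ((d:ℝ) - 1)) + 1 / ((d:ℝ) - 1))) μ volume ∧
      Icc ((-1 + (2 * (l:ℝ) - 3) / ((d:ℝ) - 1)) - 1 / ((d:ℝ) - 1))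
          ((-1 + (2 * (l:ℝ) - 3) / ((d:ℝ) - 1)) + 1 / ((d:ℝ) - 1)) ⊆ Icc (-1:ℝ) 1) ∧
    (∀ l : Fin d,
      pdf.IsUniform (fun ω => Z ((σ ω l : ℕ) + 1) ω) (Icc (-1:ℝ) 1) μ volume) := by
  have hd2 : (2:ℝ) ≤ (d:ℝ) := by exact_mod_cast hd
  have hD : (0:ℝ) < (d:ℝ) - 1 := by linarith
  have hZ1' : Measure.map (Z 1) μ = ProbabilityTheory.cond volume (Icc (-1:ℝ) 1) := hZ1
  have hv2 : volume (Icc (-1:ℝ) 1) = ENNReal.ofReal 2 := by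
    rw [Real.volume_Icc]; norm_num
  have key : ∀ l : ℕ, 2 ≤ l → l ≤ d →
      Measure.map (Z l) μ = ProbabilityTheory.cond volume
        (Icc ((-1 + (2 * (l:ℝ) - 3) / ((d:ℝ) - 1)) - 1 / ((d:ℝ) - 1))
             ((-1 + (2 * (l:ℝ) - 3) / ((d:ℝ) - 1)) + 1 / ((d:ℝ) - 1))) := by
    intro l hl2 hld
    set D : ℝ := (d:ℝ) - 1 with hDdef
    set c : ℝ := -1 + (2 * (l:ℝ) - 3) / D with hc
    set f : ℝ → ℝ := fun x => c - x / D with hfdef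
    have hf : Measurable f := by fun_prop
    have hpre : f ⁻¹' (Icc (c - 1/D) (c + 1/D)) = Icc (-1:ℝ) 1 := by
      ext x
      simp only [hfdef, mem_preimage, mem_Icc]
      constructor
      · rintro ⟨h1, h2⟩
        have e1 : x / D ≤ 1 / D := by linarith
        have e2 : (-1:ℝ) / D ≤ x / D := by rw [neg_div]; linarith
        exact ⟨(div_le_div_iff_of_pos_right hD).1 e2, (div_le_div_iff_of_pos_right hD).1 e1⟩
      · rintro ⟨h1, h2⟩
        have e1 : x / D ≤ 1 / D := (div_le_div_iff_of_pos_right hD).2 h2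
        have e2 : (-1:ℝ) / D ≤ x / D := (div_le_div_iff_of_pos_right hD).2 h1
        rw [neg_div] at e2
        constructor <;> linarith
    have hvI : volume (Icc (c - 1/D) (c + 1/D)) = ENNReal.ofReal (2 / D) := by
      rw [Real.volume_Icc]
      congr 1
      ring
    have hcomp : Z l = f ∘ (Z 1) := by rw [hZl l hl2 hld]; rfl
    show Measure.map (Z l) μ = ProbabilityTheory.cond volume (Icc (c - 1/D) (c + 1/D))
    rw [hcomp, ← Measure.map_map hf hZ1meas, hZ1', ProbabilityTheory.cond,
      ProbabilityTheory.cond, hv2, hvI, Measure.map_smul, ← hpre,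
      ← Measure.restrict_map hf measurableSet_Icc, aux_map_volume c D hD,
      Measure.restrict_smul, smul_smul, aux_inv_scal hD]
    congr 1
    rw [mul_comm]
  have hsubset : ∀ l : ℕ, 2 ≤ l → l ≤ d →
      Icc ((-1 + (2 * (l:ℝ) - 3) / ((d:ℝ) - 1)) - 1 / ((d:ℝ) - 1))
          ((-1 + (2 * (l:ℝ) - 3) / ((d:ℝ) - 1)) + 1 / ((d:ℝ) - 1)) ⊆ Icc (-1:ℝ) 1 := by
    intro l hl2 hld
    have hl2' : (2:ℝ) ≤ (l:ℝ) := by exact_mod_cast hl2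
    have hld' : (l:ℝ) ≤ (d:ℝ) := by exact_mod_cast hld
    apply Icc_subset_Icc
    · have e : (-1 + (2*(l:ℝ)-3)/((d:ℝ)-1)) - 1/((d:ℝ)-1)
          = -1 + (2*(l:ℝ)-4)/((d:ℝ)-1) := by ring
      rw [e]
      have h1 : (0:ℝ) ≤ (2*(l:ℝ)-4)/((d:ℝ)-1) := div_nonneg (by linarith) hD.le
      linarith
    · have e : (-1 + (2*(l:ℝ)-3)/((d:ℝ)-1)) + 1/((d:ℝ)-1)
          = -1 + (2*(l:ℝ)-2)/((d:ℝ)-1) := by ring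
      rw [e]
      have h2 : (2*(l:ℝ)-2)/((d:ℝ)-1) ≤ 2 := by
        rw [div_le_iff₀ hD]; linarith
      linarith
  refine ⟨fun l hl2 hld => ⟨key l hl2 hld, hsubset l hl2 hld⟩, ?_⟩
  -- Part 2
  intro l
  classical
  have hFne : ((Nat.factorial d : ℕ) : ℝ≥0∞) ≠ 0 :=
    Nat.cast_ne_zero.2 (Nat.factorial_pos d).ne'
  have hFtop : ((Nat.factorial d : ℕ) : ℝ≥0∞) ≠ ∞ := ENNReal.natCast_ne_top _
  set F : ℝ≥0∞ := ((Nat.factorial d : ℕ) : ℝ≥0∞)⁻¹ with hFdef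
  have hF1 : F ≤ 1 := by
    rw [hFdef]
    exact ENNReal.inv_le_one.2 (by exact_mod_cast Nat.one_le_iff_ne_zero.2 (Nat.factorial_pos d).ne')
  have hFfin : F ≠ ∞ := by
    rw [hFdef]
    exact ENNReal.inv_ne_top.2 hFne
  set A : Equiv.Perm (Fin d) → Set Ω := fun τ => {ω | σ ω = τ} with hA
  have hμA : ∀ τ, μ (A τ) = F := hσunif
  have hsum_univ : ∑ _τ : Equiv.Perm (Fin d), F = 1 := by
    rw [Finset.sum_const, Finset.card_univ, Fintype.card_perm, Fintype.card_fin,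
      nsmul_eq_mul, hFdef, ENNReal.mul_inv_cancel hFne hFtop]
  -- Null measurability of the events
  have hnull : ∀ τ, NullMeasurableSet (A τ) μ := by
    intro τ
    set B := toMeasurable μ (A τ) with hB
    have hBm : MeasurableSet B := measurableSet_toMeasurable μ _
    have hμB : μ B = F := by rw [hB, measure_toMeasurable, hμA]
    have hsub : A τ ⊆ B := subset_toMeasurable μ _
    have hsplit : ∀ τ', μ (A τ' ∩ B) + μ (A τ' \ B) = F := fun τ' => by
      rw [measure_inter_add_diff _ hBm, hμA]
    have hcover2 : univ \ B ⊆ ⋃ τ', (A τ' \ B) := by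
      intro ω hω
      exact mem_iUnion.2 ⟨σ ω, rfl, hω.2⟩
    have hdiffsum : (1:ℝ≥0∞) - F ≤ ∑ τ', μ (A τ' \ B) := by
      calc (1:ℝ≥0∞) - F = μ (univ \ B) := by
            rw [measure_diff (subset_univ B) hBm.nullMeasurableSet
              (by rw [hμB]; exact hFfin), measure_univ, hμB]
        _ ≤ μ (⋃ τ', (A τ' \ B)) := measure_mono hcover2
        _ ≤ ∑' τ', μ (A τ' \ B) := measure_iUnion_le _
        _ = ∑ τ', μ (A τ' \ B) := tsum_fintype _
    have hintersum : ∑ τ', μ (A τ' ∩ B) ≤ F := by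
      have h1 : (∑ τ', μ (A τ' ∩ B)) + ∑ τ', μ (A τ' \ B) = 1 := by
        rw [← Finset.sum_add_distrib]
        simp_rw [hsplit]
        exact hsum_univ
      have hbfin : (∑ τ', μ (A τ' \ B)) ≠ ∞ := by
        intro htop
        rw [htop, add_top] at h1
        exact (by norm_num : (⊤:ℝ≥0∞) ≠ 1) h1
      have ha : (∑ τ', μ (A τ' ∩ B)) = 1 - ∑ τ', μ (A τ' \ B) :=
        ENNReal.eq_sub_of_add_eq hbfin h1
      rw [ha]
      calc (1:ℝ≥0∞) - ∑ τ', μ (A τ' \ B) ≤ 1 - (1 - F) := tsub_le_tsub_left hdiffsum 1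
        _ = F := ENNReal.sub_sub_cancel (by norm_num) hF1
    have hτterm : μ (A τ ∩ B) = F := by
      rw [inter_eq_self_of_subset_left hsub, hμA]
    have hrest : ∀ τ', τ' ≠ τ → μ (A τ' ∩ B) = 0 := by
      intro τ' hne
      by_contra h0
      have hlt : F < ∑ τ'', μ (A τ'' ∩ B) := by
        calc F = μ (A τ ∩ B) := hτterm.symm
          _ < μ (A τ ∩ B) + μ (A τ' ∩ B) :=
              ENNReal.lt_add_right (by rw [hτterm]; exact hFfin) h0
          _ = ∑ τ'' ∈ ({τ, τ'} : Finset _), μ (A τ'' ∩ B) :=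
              (Finset.sum_pair (f := fun τ'' => μ (A τ'' ∩ B)) (Ne.symm hne)).symm
          _ ≤ ∑ τ'', μ (A τ'' ∩ B) :=
              Finset.sum_le_sum_of_subset (Finset.subset_univ _)
      exact absurd hintersum (not_le.2 hlt)
    have hBdiff : μ (B \ A τ) = 0 := by
      apply measure_mono_null (t := ⋃ τ' : {x : Equiv.Perm (Fin d) // x ≠ τ}, (A τ' ∩ B))
      · intro ω hω
        exact mem_iUnion.2 ⟨⟨σ ω, fun h => hω.2 h⟩, rfl, hω.1⟩
      · exact measure_iUnion_null fun τ' => hrest τ' τ'.2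
    refine NullMeasurableSet.congr hBm.nullMeasurableSet ?_
    rw [MeasureTheory.ae_eq_set]
    exact ⟨hBdiff, measure_mono_null (diff_subset_diff_left hsub) (by simp)⟩
  -- measurability of each Z (k+1)
  have hZmeas : ∀ k : Fin d, Measurable (Z ((k:ℕ)+1)) := by
    intro k
    rcases Nat.eq_zero_or_pos (k:ℕ) with h0 | hpos
    · rw [h0]; exact hZ1meas
    · have h2 : 2 ≤ (k:ℕ)+1 := by omega
      have hld : (k:ℕ)+1 ≤ d := by have := k.isLt; omega
      rw [hZl _ h2 hld]
      fun_prop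
  have hYeq : (fun ω => Z ((σ ω l : ℕ) + 1) ω)
      = fun ω => ∑ τ : Equiv.Perm (Fin d),
          (A τ).indicator (fun ω' => Z ((τ l : ℕ) + 1) ω') ω := by
    funext ω
    rw [Finset.sum_eq_single (σ ω)]
    · rw [indicator_of_mem (show ω ∈ A (σ ω) from rfl)]
    · intro τ _ hne
      have hnm2 : ω ∉ A τ := fun h => hne (Eq.symm h)
      simp [hnm2]
    · intro h
      exact absurd (Finset.mem_univ _) h
  have hYmeas : AEMeasurable (fun ω => Z ((σ ω l : ℕ) + 1) ω) μ := by
    rw [hYeq]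
    exact Finset.aemeasurable_fun_sum _ fun τ _ =>
      ((hZmeas (τ l)).aemeasurable).indicator₀ (hnull τ)
  show Measure.map (fun ω => Z ((σ ω l : ℕ) + 1) ω) μ
      = ProbabilityTheory.cond volume (Icc (-1:ℝ) 1)
  ext s hs
  rw [Measure.map_apply_of_aemeasurable hYmeas hs,
    ProbabilityTheory.cond_apply measurableSet_Icc, hv2]
  set w : ℕ → ℝ≥0∞ := fun j => μ (Z (j+1) ⁻¹' s) with hw
  set v : Fin d → ℝ≥0∞ := fun k => w (k:ℕ) with hv
  have hpreim : (fun ω => Z ((σ ω l : ℕ) + 1) ω) ⁻¹' s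
      = ⋃ τ, (A τ ∩ Z ((τ l : ℕ) + 1) ⁻¹' s) := by
    ext ω
    simp only [mem_preimage, mem_iUnion, mem_inter_iff]
    constructor
    · intro h
      exact ⟨σ ω, rfl, h⟩
    · rintro ⟨τ, h1, h2⟩
      have h3 : σ ω = τ := h1
      rw [h3]; exact h2
  have hdisj : Pairwise (Function.onFun (AEDisjoint μ)
      fun τ => A τ ∩ Z ((τ l : ℕ) + 1) ⁻¹' s) := by
    intro τ τ' hne
    refine Disjoint.aedisjoint (Set.disjoint_left.2 ?_)
    rintro ω ⟨h1, _⟩ ⟨h2, _⟩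
    exact hne ((show σ ω = τ from h1).symm.trans (show σ ω = τ' from h2))
  have hnm : ∀ τ, NullMeasurableSet (A τ ∩ Z ((τ l : ℕ) + 1) ⁻¹' s) μ :=
    fun τ => (hnull τ).inter ((hZmeas (τ l) hs).nullMeasurableSet)
  rw [hpreim, measure_iUnion₀ hdisj hnm, tsum_fintype]
  -- each term
  have hterm : ∀ τ : Equiv.Perm (Fin d),
      μ (A τ ∩ Z ((τ l : ℕ) + 1) ⁻¹' s) = F * v (τ l) := by
    intro τ
    rcases Nat.eq_zero_or_pos ((τ l : ℕ)) with h0 | hpos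
    · have h := hindep τ s hs
      rw [hσunif τ] at h
      rw [hv, hw]
      simp only [h0]
      exact h
    · have h2 : 2 ≤ (τ l:ℕ)+1 := by omega
      have hldd : (τ l:ℕ)+1 ≤ d := by have := (τ l).isLt; omega
      have hcomp : Z ((τ l:ℕ)+1)
          = (fun x => (-1 + (2*(((τ l:ℕ)+1:ℕ):ℝ)-3)/((d:ℝ)-1)) - x/((d:ℝ)-1)) ∘ Z 1 := by
        rw [hZl _ h2 hldd]; rfl
      have hfm : Measurable (fun x : ℝ =>
          (-1 + (2*(((τ l:ℕ)+1:ℕ):ℝ)-3)/((d:ℝ)-1)) - x/((d:ℝ)-1)) := by fun_prop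
      have h := hindep τ _ (hfm hs)
      rw [hσunif τ] at h
      rw [hv, hw]
      simp only
      rw [hcomp, preimage_comp]
      exact h
  rw [Finset.sum_congr rfl (fun τ _ => hterm τ), ← Finset.mul_sum]
  -- counting
  set N : ℕ := (Finset.univ.filter fun τ : Equiv.Perm (Fin d) => τ l = l).card with hN
  have hfib : ∀ k : Fin d,
      (Finset.univ.filter fun τ : Equiv.Perm (Fin d) => τ l = k).card = N := by
    intro k
    rw [hN]
    apply Finset.card_bij' (fun τ _ => Equiv.swap k l * τ) (fun τ _ => Equiv.swap k l * τ)
    · intro τ hτ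
      rw [Finset.mem_filter] at hτ ⊢
      refine ⟨Finset.mem_univ _, ?_⟩
      rw [Equiv.Perm.mul_apply, hτ.2, Equiv.swap_apply_left]
    · intro τ hτ
      rw [Finset.mem_filter] at hτ ⊢
      refine ⟨Finset.mem_univ _, ?_⟩
      rw [Equiv.Perm.mul_apply, hτ.2, Equiv.swap_apply_right]
    · intro τ _
      rw [← mul_assoc, Equiv.swap_mul_self, one_mul]
    · intro τ _
      rw [← mul_assoc, Equiv.swap_mul_self, one_mul]
  have himg : Finset.image (fun τ : Equiv.Perm (Fin d) => τ l) Finset.univ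
      = Finset.univ :=
    Finset.eq_univ_iff_forall.2 fun k =>
      Finset.mem_image.2 ⟨Equiv.swap l k, Finset.mem_univ _, Equiv.swap_apply_left l k⟩
  have hsumcomp : ∑ τ : Equiv.Perm (Fin d), v (τ l) = ∑ k : Fin d, (N:ℝ≥0∞) * v k := by
    rw [Finset.sum_comp v (fun τ : Equiv.Perm (Fin d) => τ l), himg]
    refine Finset.sum_congr rfl fun k _ => ?_
    rw [hfib k, nsmul_eq_mul]
  have hNd : (N:ℝ≥0∞) * (d:ℝ≥0∞) = ((Nat.factorial d : ℕ) : ℝ≥0∞) := by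
    have hcard : ∑ k : Fin d,
        (Finset.univ.filter fun τ : Equiv.Perm (Fin d) => τ l = k).card
          = Nat.factorial d := by
      calc ∑ k : Fin d, (Finset.univ.filter fun τ : Equiv.Perm (Fin d) => τ l = k).card
          = (Finset.univ : Finset (Equiv.Perm (Fin d))).card :=
            (Finset.card_eq_sum_card_fiberwise (fun τ _ => Finset.mem_univ (τ l))).symm
        _ = Nat.factorial d := by
            rw [Finset.card_univ, Fintype.card_perm, Fintype.card_fin]
    simp_rw [hfib] at hcard
    rw [Finset.sum_const, Finset.card_univ, Fintype.card_fin, smul_eq_mul] at hcard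
    rw [mul_comm, ← Nat.cast_mul, hcard]
  obtain ⟨e, he⟩ : ∃ e, d = e + 1 := ⟨d - 1, by omega⟩
  have he' : (e:ℝ) = (d:ℝ) - 1 := by
    have hde : (d:ℝ) = (e:ℝ) + 1 := by exact_mod_cast he
    linarith
  set g : ℕ → ℝ := fun j => -1 + 2*(j:ℝ)/((d:ℝ)-1) with hg
  have hgmono : ∀ j : ℕ, g j ≤ g (j+1) := by
    intro j
    rw [hg]
    simp only
    have h1 : 2*(j:ℝ)/((d:ℝ)-1) ≤ 2*((j:ℕ)+1:ℝ)/((d:ℝ)-1) :=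
      (div_le_div_iff_of_pos_right hD).2 (by push_cast; linarith)
    push_cast at h1 ⊢
    linarith
  have hg0 : g 0 = -1 := by rw [hg]; norm_num
  have hge1 : g e = 1 := by
    rw [hg]
    simp only
    rw [he', mul_div_assoc, div_self hD.ne']
    ring
  have hw0 : w 0 = (ENNReal.ofReal 2)⁻¹ * volume (Icc (-1:ℝ) 1 ∩ s) := by
    rw [hw]
    simp only
    rw [show (0+1 : ℕ) = 1 from rfl, ← Measure.map_apply hZ1meas hs, hZ1',
      ProbabilityTheory.cond_apply measurableSet_Icc, hv2]
  have hwj : ∀ j ∈ Finset.range e, w (j+1)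
      = (ENNReal.ofReal (2/((d:ℝ)-1)))⁻¹ * volume (Icc (g j) (g (j+1)) ∩ s) := by
    intro j hj
    rw [Finset.mem_range] at hj
    have h2 : 2 ≤ j+1+1 := by omega
    have hld : j+1+1 ≤ d := by omega
    have hm : Measurable (Z (j+1+1)) := by rw [hZl _ h2 hld]; fun_prop
    have hIeq : Icc ((-1 + (2*((j+1+1:ℕ):ℝ)-3)/((d:ℝ)-1)) - 1/((d:ℝ)-1))
        ((-1 + (2*((j+1+1:ℕ):ℝ)-3)/((d:ℝ)-1)) + 1/((d:ℝ)-1)) = Icc (g j) (g (j+1)) := by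
      rw [hg]
      congr 1 <;> push_cast <;> ring
    have hvolI : volume (Icc (g j) (g (j+1))) = ENNReal.ofReal (2/((d:ℝ)-1)) := by
      rw [hg, Real.volume_Icc]
      congr 1
      push_cast
      ring
    rw [hw]
    simp only
    rw [← Measure.map_apply hm hs, key (j+1+1) h2 hld,
      ProbabilityTheory.cond_apply measurableSet_Icc, hIeq, hvolI]
  have hsumv : ∑ k : Fin d, v k
      = (ENNReal.ofReal (2/((d:ℝ)-1)))⁻¹ * volume (Icc (-1:ℝ) 1 ∩ s)
        + (ENNReal.ofReal 2)⁻¹ * volume (Icc (-1:ℝ) 1 ∩ s) := by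
    rw [hv]
    calc ∑ k : Fin d, w (k:ℕ) = ∑ j ∈ Finset.range d, w j := Fin.sum_univ_eq_sum_range w d
      _ = ∑ j ∈ Finset.range e, w (j+1) + w 0 := by rw [he, Finset.sum_range_succ']
      _ = _ := by
          rw [Finset.sum_congr rfl hwj, ← Finset.mul_sum,
            aux_interval_sum g hgmono s hs e, hg0, hge1, hw0]
  rw [hsumcomp, ← Finset.mul_sum, hsumv, aux_inv_scal hD]
  have hofd : ENNReal.ofReal ((d:ℝ)-1) + 1 = (d:ℝ≥0∞) := by
    rw [show (1:ℝ≥0∞) = ENNReal.ofReal 1 by simp,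
      ← ENNReal.ofReal_add (by linarith) (by norm_num),
      show (d:ℝ)-1+1 = (d:ℝ) by ring, ENNReal.ofReal_natCast]
  calc F * ((N:ℝ≥0∞) * (ENNReal.ofReal ((d:ℝ)-1) * (ENNReal.ofReal 2)⁻¹
        * volume (Icc (-1:ℝ) 1 ∩ s) + (ENNReal.ofReal 2)⁻¹ * volume (Icc (-1:ℝ) 1 ∩ s)))
      = (F * ((N:ℝ≥0∞) * (d:ℝ≥0∞))) * ((ENNReal.ofReal 2)⁻¹ * volume (Icc (-1:ℝ) 1 ∩ s)) := by
        rw [← hofd]; ring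
    _ = (ENNReal.ofReal 2)⁻¹ * volume (Icc (-1:ℝ) 1 ∩ s) := by
        rw [hNd, hFdef, ENNReal.inv_mul_cancel hFne hFtop, one_mul]
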